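/- Let x* ≠ 0 minimize f(x) = (1/2)(‖Px‖ + ρ‖x‖)² − bᵀAx, where ρ > 0 and Px* ≠ 0. Set α = ‖Px*‖ and β = ‖x*‖. Then (α + ρβ)·(α⁻¹ PᵀP x* + ρ β⁻¹ x*) = Aᵀb, and equivalently x* = (1/(α + ρβ)) · (α⁻¹ PᵀP + ρ β⁻¹ I)⁻¹ Aᵀb. -/

import Mathlib

open Matrix BigOperators

noncomputable def vnorm {n : ℕ} (x : Fin n → ℝ) : ℝ := Real.sqrt (∑ i, x i ^ 2)

noncomputable def fnorm {m n : ℕ} (A : Matrix (Fin m) (Fin n) ℝ) : ℝ :=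
  Real.sqrt (∑ i, ∑ j, A i j ^ 2)

lemma vnorm_pos {n : ℕ} {x : Fin n → ℝ} (hx : x ≠ 0) : 0 < vnorm x := by
  apply Real.sqrt_pos.2
  rcases Function.ne_iff.1 hx with ⟨i, hi⟩
  have h2 : (0:ℝ) < x i ^ 2 := by
    rw [← sq_abs]; exact pow_pos (abs_pos.2 hi) 2
  exact h2.trans_le (Finset.single_le_sum (f := fun i => x i ^ 2)
    (fun j _ => sq_nonneg _) (Finset.mem_univ i))

lemma hasDerivAt_vnorm_line {n : ℕ} (u w : Fin n → ℝ) (hu : u ≠ 0) :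
    HasDerivAt (fun t : ℝ => vnorm (u + t • w)) ((u ⬝ᵥ w) / vnorm u) 0 := by
  have hq : HasDerivAt (fun t : ℝ => ∑ i, (u i + t * w i) ^ 2) (∑ i, 2 * u i * w i) 0 := by
    apply HasDerivAt.fun_sum
    intro i _
    have h1 : HasDerivAt (fun t : ℝ => u i + t * w i) (w i) 0 := by
      simpa using ((hasDerivAt_id (0:ℝ)).mul_const (w i)).const_add (u i)
    simpa [mul_assoc, mul_comm] using h1.fun_pow 2
  have hne : (∑ i, (u i + (0:ℝ) * w i) ^ 2) ≠ 0 := by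
    have h := vnorm_pos hu
    simp only [zero_mul, add_zero]
    intro h0
    rw [vnorm, h0, Real.sqrt_zero] at h
    exact lt_irrefl 0 h
  have H := hq.sqrt hne
  have heq : (∑ i, 2 * u i * w i) / (2 * Real.sqrt (∑ i, (u i + (0:ℝ) * w i) ^ 2))
      = (u ⬝ᵥ w) / vnorm u := by
    simp only [zero_mul, add_zero, vnorm, dotProduct]
    rw [show (∑ i, 2 * u i * w i) = 2 * ∑ i, u i * w i by
      rw [Finset.mul_sum]; congr 1; ext i; ring]
    rw [mul_div_mul_left _ _ (two_ne_zero)]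
  rw [heq] at H
  have hfun : (fun t : ℝ => vnorm (u + t • w)) = fun t => Real.sqrt (∑ i, (u i + t * w i) ^ 2) := by
    funext t; simp [vnorm]
  rw [hfun]
  exact H

theorem stmt6 {m M N : ℕ} (P : Matrix (Fin m) (Fin N) ℝ) (A : Matrix (Fin M) (Fin N) ℝ)
    (b : Fin M → ℝ) (ρ : ℝ) (hρ : 0 < ρ)
    (f : (Fin N → ℝ) → ℝ)
    (hf : f = fun x => (1 / 2) * (vnorm (P *ᵥ x) + ρ * vnorm x) ^ 2 - b ⬝ᵥ (A *ᵥ x))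
    (xs : Fin N → ℝ) (hxs : xs ≠ 0) (hPxs : P *ᵥ xs ≠ 0)
    (hmin : ∀ y : Fin N → ℝ, f xs ≤ f y)
    (α β : ℝ) (hα : α = vnorm (P *ᵥ xs)) (hβ : β = vnorm xs) :
    (α + ρ * β) • (α⁻¹ • ((Pᵀ * P) *ᵥ xs) + (ρ * β⁻¹) • xs) = Aᵀ *ᵥ b ∧
    xs = (α + ρ * β)⁻¹ • ((α⁻¹ • (Pᵀ * P) + (ρ * β⁻¹) • (1 : Matrix (Fin N) (Fin N) ℝ))⁻¹
      *ᵥ (Aᵀ *ᵥ b)) := by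
  have hαpos : 0 < α := hα ▸ vnorm_pos hPxs
  have hβpos : 0 < β := hβ ▸ vnorm_pos hxs
  -- key scalar identity for every direction v
  have key : ∀ v : Fin N → ℝ,
      (α + ρ * β) * (α⁻¹ * (((Pᵀ * P) *ᵥ xs) ⬝ᵥ v) + ρ * β⁻¹ * (xs ⬝ᵥ v)) = (Aᵀ *ᵥ b) ⬝ᵥ v := by
    intro v
    have h1 : HasDerivAt (fun t : ℝ => vnorm (P *ᵥ (xs + t • v)))
        (((P *ᵥ xs) ⬝ᵥ (P *ᵥ v)) / α) 0 := by
      have := hasDerivAt_vnorm_line (P *ᵥ xs) (P *ᵥ v) hPxs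
      rw [hα]
      convert this using 2 with t
      rw [mulVec_add, mulVec_smul]
    have h2 : HasDerivAt (fun t : ℝ => vnorm (xs + t • v)) ((xs ⬝ᵥ v) / β) 0 := by
      rw [hβ]; exact hasDerivAt_vnorm_line xs v hxs
    have hg : HasDerivAt (fun t : ℝ => vnorm (P *ᵥ (xs + t • v)) + ρ * vnorm (xs + t • v))
        (((P *ᵥ xs) ⬝ᵥ (P *ᵥ v)) / α + ρ * ((xs ⬝ᵥ v) / β)) 0 :=
      h1.add (h2.const_mul ρ)
    have hg0 : vnorm (P *ᵥ (xs + (0:ℝ) • v)) + ρ * vnorm (xs + (0:ℝ) • v) = α + ρ * β := by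
      rw [hα, hβ]; simp
    have hsq := (hg.pow 2).const_mul (1/2 : ℝ)
    have hlin : HasDerivAt (fun t : ℝ => b ⬝ᵥ (A *ᵥ (xs + t • v))) (b ⬝ᵥ (A *ᵥ v)) 0 := by
      have : (fun t : ℝ => b ⬝ᵥ (A *ᵥ (xs + t • v)))
          = fun t => b ⬝ᵥ (A *ᵥ xs) + t * (b ⬝ᵥ (A *ᵥ v)) := by
        funext t
        rw [mulVec_add, mulVec_smul, dotProduct_add, dotProduct_smul, smul_eq_mul]
      rw [this]
      simpa using ((hasDerivAt_id (0:ℝ)).mul_const (b ⬝ᵥ (A *ᵥ v))).const_add (b ⬝ᵥ (A *ᵥ xs))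
    have hφ : HasDerivAt (fun t : ℝ => f (xs + t • v))
        ((1/2) * (2 * (vnorm (P *ᵥ (xs + (0:ℝ) • v)) + ρ * vnorm (xs + (0:ℝ) • v)) ^ 1 *
          ((P *ᵥ xs) ⬝ᵥ (P *ᵥ v) / α + ρ * ((xs ⬝ᵥ v) / β))) - b ⬝ᵥ (A *ᵥ v)) 0 := by
      rw [hf]
      exact hsq.sub hlin
    have hloc : IsLocalMin (fun t : ℝ => f (xs + t • v)) 0 := by
      apply Filter.Eventually.of_forall
      intro t
      simpa using hmin (xs + t • v)
    have hzero := hloc.hasDerivAt_eq_zero hφ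
    rw [hg0] at hzero
    have hdot1 : (P *ᵥ xs) ⬝ᵥ (P *ᵥ v) = ((Pᵀ * P) *ᵥ xs) ⬝ᵥ v := by
      rw [dotProduct_mulVec, ← mulVec_transpose, mulVec_mulVec]
    have hdot2 : b ⬝ᵥ (A *ᵥ v) = (Aᵀ *ᵥ b) ⬝ᵥ v := by
      rw [dotProduct_mulVec, ← mulVec_transpose]
    rw [hdot1, hdot2] at hzero
    have hαne : α ≠ 0 := hαpos.ne'
    have hβne : β ≠ 0 := hβpos.ne'
    field_simp at hzero ⊢
    nlinarith [hzero]
  -- part 1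
  have part1 : (α + ρ * β) • (α⁻¹ • ((Pᵀ * P) *ᵥ xs) + (ρ * β⁻¹) • xs) = Aᵀ *ᵥ b := by
    funext j
    have h := key (Pi.single j 1)
    simp only [dotProduct_single, mul_one] at h
    simpa [Pi.smul_apply, Pi.add_apply, smul_eq_mul, mul_add] using h
  refine ⟨part1, ?_⟩
  -- part 2
  set Mm : Matrix (Fin N) (Fin N) ℝ := α⁻¹ • (Pᵀ * P) + (ρ * β⁻¹) • (1 : Matrix (Fin N) (Fin N) ℝ)
    with hMm
  have hPS : (Pᵀ * P).PosSemidef := by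
    have := posSemidef_conjTranspose_mul_self P
    simpa using this
  have hPD : Mm.PosDef := by
    rw [posDef_iff_dotProduct_mulVec]
    constructor
    · have h1 : (α⁻¹ • (Pᵀ * P)).IsHermitian := by
        have := hPS.1
        unfold Matrix.IsHermitian at this ⊢
        rw [conjTranspose_smul, this]
        simp
      have h2 : ((ρ * β⁻¹) • (1 : Matrix (Fin N) (Fin N) ℝ)).IsHermitian := by
        unfold Matrix.IsHermitian
        rw [conjTranspose_smul, conjTranspose_one]
        simp
      exact h1.add h2
    · intro x hx
      have hx2 : (0:ℝ) < x ⬝ᵥ x := by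
        show (0:ℝ) < ∑ i, x i * x i
        rcases Function.ne_iff.1 hx with ⟨i, hi⟩
        have h2 : (0:ℝ) < x i * x i := mul_self_pos.2 hi
        exact h2.trans_le (Finset.single_le_sum (f := fun j => x j * x j)
          (fun j _ => mul_self_nonneg _) (Finset.mem_univ i))
      have hx1 : (0:ℝ) ≤ (P *ᵥ x) ⬝ᵥ (P *ᵥ x) := by
        show (0:ℝ) ≤ ∑ i, (P *ᵥ x) i * (P *ᵥ x) i
        exact Finset.sum_nonneg fun i _ => mul_self_nonneg _
      have hPPx : x ⬝ᵥ ((Pᵀ * P) *ᵥ x) = (P *ᵥ x) ⬝ᵥ (P *ᵥ x) := by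
        rw [← mulVec_mulVec, dotProduct_mulVec, vecMul_transpose]
      show 0 < star x ⬝ᵥ (Mm *ᵥ x)
      have hstar : star x = x := by simp
      rw [hstar, hMm, add_mulVec, smul_mulVec, smul_mulVec, one_mulVec,
        dotProduct_add, dotProduct_smul, dotProduct_smul, smul_eq_mul, smul_eq_mul, hPPx]
      have : 0 < ρ * β⁻¹ * (x ⬝ᵥ x) := by positivity
      have h1 : 0 ≤ α⁻¹ * ((P *ᵥ x) ⬝ᵥ (P *ᵥ x)) := by positivity
      linarith
  have hdet : IsUnit Mm.det := hPD.det_pos.ne'.isUnit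
  have hABne : α + ρ * β ≠ 0 := by positivity
  have hMmxs : Mm *ᵥ xs = (α + ρ * β)⁻¹ • (Aᵀ *ᵥ b) := by
    rw [← part1, smul_smul, inv_mul_cancel₀ hABne, one_smul, hMm, add_mulVec,
      smul_mulVec, smul_mulVec, one_mulVec]
  have : Mm⁻¹ *ᵥ (Mm *ᵥ xs) = xs := by
    rw [mulVec_mulVec, nonsing_inv_mul Mm hdet, one_mulVec]
  rw [← this, hMmxs, mulVec_smul]
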